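/- arXiv:1912.01370 — 3 statements merged into one kernel-verified Lean document; each statement's English description precedes it below -/
import Mathlib

section
/- Let z_t satisfy the Loewner–Kufarev equation ∂_t z_t(w) = −w p_t(w) ∂_w z_t(w) on the exterior of the unit disk with the Laplacian-growth density ρ_t(e^{iφ}) = (Q/2π)|z_t'(e^{iφ})|^{−2}. Then the boundary parametrization z_t(e^{iφ}) satisfies the Laplacian growth equation Im( ∂_t z̄_t(e^{−iφ}) · ∂_φ z_t(e^{iφ}) ) = Q/(2π). -/
open Complex

/-- the Loewner–Kufarev equation with the Laplacian-growth density
`ρ_t(e^{iφ}) = (Q/2π)|z_t'(e^{iφ})|⁻²` (i.e. `Re p_t = −(Q/2π)/|z_t'|²` on the circle)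
implies the Laplacian growth equation
`Im( ∂ₜ z̄_t(e^{−iφ}) · ∂_φ z_t(e^{iφ}) ) = Q/(2π)`. -/
theorem laplacian_growth_equation
    (Q : ℝ) (z zw p : ℝ → ℂ → ℂ) (t φ : ℝ)
    (u : ℂ) (hu : u = Complex.exp (φ * Complex.I))
    (dtz dφz : ℂ)
    (ht : HasDerivAt (fun τ => z τ u) dtz t)
    (hdt : dtz = -(u * p t u * zw t u))
    (hφ : HasDerivAt (fun ψ : ℝ => z t (Complex.exp (ψ * Complex.I))) dφz φ)
    (hdφ : dφz = Complex.I * u * zw t u)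
    (hzw : zw t u ≠ 0)
    (hre : (p t u).re = -(Q / (2 * Real.pi)) / ‖zw t u‖ ^ 2) :
    ((starRingEnd ℂ) dtz * dφz).im = Q / (2 * Real.pi) := by
  set a := p t u with ha
  set c := zw t u with hc
  have hu1 : (starRingEnd ℂ) u * u = 1 := by
    rw [mul_comm, Complex.mul_conj]
    simp [hu, Complex.normSq_eq_norm_sq, Complex.norm_exp_ofReal_mul_I]
  have hcc : (starRingEnd ℂ) c * c = ((‖c‖ ^ 2 : ℝ) : ℂ) := by
    rw [mul_comm, Complex.mul_conj, Complex.normSq_eq_norm_sq]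
  have key : (starRingEnd ℂ) dtz * dφz
      = -(((starRingEnd ℂ) u * u) * (((starRingEnd ℂ) c * c)) * Complex.I
          * (starRingEnd ℂ) a) := by
    rw [hdt, hdφ]
    simp only [map_neg, map_mul]
    ring
  rw [key, hu1, hcc]
  have habs : ‖c‖ ^ 2 ≠ 0 := by
    simpa using (norm_ne_zero_iff.mpr hzw)
  have : (-(1 * ((‖c‖ ^ 2 : ℝ) : ℂ) * Complex.I * (starRingEnd ℂ) a)).im
      = -(‖c‖ ^ 2 * a.re) := by
    simp [Complex.mul_im, Complex.mul_re, ← Complex.ofReal_pow]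
  rw [this, hre]
  field_simp
end

section
/- (Hadamard variational formula, exterior disk model) Let D_t be exterior Jordan domains evolving so that the boundary moves with normal velocity v_n (normal pointing into D_t), and let G_t(z, z') be the Dirichlet Green's function of D_t. Then d/dt G_t(z, z') = (1/2π) ∮_{∂D_t} ∂_n G_t(z, s) ∂_n G_t(z', s) v_n(s) |ds| for fixed z, z' ∈ D_t. Equivalently, in terms of Poisson kernels, dG_t(z,z')/dt = (1/2π) ∮ H_t(z,s) H_t(z',s) v_n(s) |ds|. -/
open Complex

private lemma key_core (a b A B x y u v p q r s : ℂ)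
    (M1 : (a - b) * p = 1) (M2 : (A - B) * q = 1)
    (M3 : (1 - A * b) * r = 1) (M4 : (1 - a * B) * s = 1)
    (N1 : (a - b) * (x * y) = x - y) (N2 : (1 - a * B) * (x * v) = x + B * v)
    (N3 : (1 - A * b) * (u * y) = y + A * u) (N4 : (A - B) * (u * v) = A * u - B * v) :
    (a * p + a * B * s) * (1 + 2 * a * x) + (-(b * p) + A * b * r) * (1 + 2 * b * y)
      + (A * q + A * b * r) * (-1 + 2 * u) + (-(B * q) + a * B * s) * (-1 + 2 * v)
    = 2 * a * b * (x * y) + 2 * a * (x * v) + 2 * b * (u * y) + 2 * (u * v) := by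
  linear_combination (1 + 2*a*x + 2*b*y + 2*a*b*(x*y)) * M1 + (-1 + 2*(u*v)) * M2
    + (2*b*(u*y) - 2*b*y) * M3 + (2*a*(x*v) - 2*a*x) * M4
    - (2*a*b*p) * N1 - (2*a*s) * N2 - (2*b*r) * N3 - (2*q) * N4

set_option maxHeartbeats 1600000 in
private lemma key_identity (e a b A B : ℂ)
    (hab : a - b ≠ 0) (hAB : A - B ≠ 0)
    (hea : e - a ≠ 0) (heb : e - b ≠ 0)
    (hAb : (1 : ℂ) - A * b ≠ 0) (haB : (1 : ℂ) - a * B ≠ 0)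
    (hAe : (1 : ℂ) - A * e ≠ 0) (hBe : (1 : ℂ) - B * e ≠ 0) :
    (a / (a - b) + a * B / (1 - a * B)) * ((e + a) / (e - a))
      + (-(b / (a - b)) + A * b / (1 - A * b)) * ((e + b) / (e - b))
      + (A / (A - B) + A * b / (1 - A * b)) * ((1 + A * e) / (1 - A * e))
      + (-(B / (A - B)) + a * B / (1 - a * B)) * ((1 + B * e) / (1 - B * e))
    = ((e + a) / (e - a) + (1 + A * e) / (1 - A * e)) *
        ((e + b) / (e - b) + (1 + B * e) / (1 - B * e)) / 2 := by
  have hSa : (e + a) / (e - a) = 1 + 2 * a * (e - a)⁻¹ := by field_simp; ring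
  have hSb : (e + b) / (e - b) = 1 + 2 * b * (e - b)⁻¹ := by field_simp; ring
  have hTa : (1 + A * e) / (1 - A * e) = -1 + 2 * (1 - A * e)⁻¹ := by field_simp; ring
  have hTb : (1 + B * e) / (1 - B * e) = -1 + 2 * (1 - B * e)⁻¹ := by field_simp; ring
  have M1 : (a - b) * (a - b)⁻¹ = 1 := mul_inv_cancel₀ hab
  have M2 : (A - B) * (A - B)⁻¹ = 1 := mul_inv_cancel₀ hAB
  have M3 : ((1 : ℂ) - A * b) * (1 - A * b)⁻¹ = 1 := mul_inv_cancel₀ hAb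
  have M4 : ((1 : ℂ) - a * B) * (1 - a * B)⁻¹ = 1 := mul_inv_cancel₀ haB
  have N1 : (a - b) * ((e - a)⁻¹ * (e - b)⁻¹) = (e - a)⁻¹ - (e - b)⁻¹ := by
    field_simp
    try ring
  have N2 : ((1 : ℂ) - a * B) * ((e - a)⁻¹ * (1 - B * e)⁻¹) = (e - a)⁻¹ + B * (1 - B * e)⁻¹ := by
    field_simp
    try ring
  have N3 : ((1 : ℂ) - A * b) * ((1 - A * e)⁻¹ * (e - b)⁻¹) = (e - b)⁻¹ + A * (1 - A * e)⁻¹ := by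
    field_simp
    try ring
  have N4 : (A - B) * ((1 - A * e)⁻¹ * (1 - B * e)⁻¹)
      = A * (1 - A * e)⁻¹ - B * (1 - B * e)⁻¹ := by
    field_simp
    try ring
  have h := key_core a b A B (e - a)⁻¹ (e - b)⁻¹ (1 - A * e)⁻¹ (1 - B * e)⁻¹
    (a - b)⁻¹ (A - B)⁻¹ (1 - A * b)⁻¹ (1 - a * B)⁻¹ M1 M2 M3 M4 N1 N2 N3 N4
  rw [hSa, hSb, hTa, hTb]
  simp only [div_eq_mul_inv]
  linear_combination h

private lemma hasDerivAt_log_complexAbs {F : ℝ → ℂ} {F' c : ℂ} {t : ℝ}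
    (hF : HasDerivAt F F' t) (hc : F t = c) (h0 : c ≠ 0) :
    HasDerivAt (fun τ => Real.log ‖F τ‖) ((F' / c).re) t := by
  subst hc
  have hre : HasDerivAt (fun τ => (F τ).re) F'.re t := by
    simpa [Function.comp_def] using Complex.reCLM.hasFDerivAt.comp_hasDerivAt t hF
  have him : HasDerivAt (fun τ => (F τ).im) F'.im t := by
    simpa [Function.comp_def] using Complex.imCLM.hasFDerivAt.comp_hasDerivAt t hF
  have hns : (F t).re * (F t).re + (F t).im * (F t).im ≠ 0 := by
    have h1 := Complex.normSq_pos.mpr h0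
    rw [Complex.normSq_apply] at h1
    exact ne_of_gt h1
  have hsq : HasDerivAt (fun τ => (F τ).re * (F τ).re + (F τ).im * (F τ).im)
      (F'.re * (F t).re + (F t).re * F'.re + (F'.im * (F t).im + (F t).im * F'.im)) t :=
    (hre.mul hre).add (him.mul him)
  have hlog : HasDerivAt (fun τ => Real.log ((F τ).re * (F τ).re + (F τ).im * (F τ).im) / 2)
      ((F'.re * (F t).re + (F t).re * F'.re + (F'.im * (F t).im + (F t).im * F'.im))
        / ((F t).re * (F t).re + (F t).im * (F t).im) / 2) t := (hsq.log hns).div_const 2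
  have hfun : (fun τ => Real.log ‖F τ‖)
      = fun τ => Real.log ((F τ).re * (F τ).re + (F τ).im * (F τ).im) / 2 := by
    funext τ
    rw [Complex.norm_def, Complex.normSq_apply,
      Real.log_sqrt (add_nonneg (mul_self_nonneg _) (mul_self_nonneg _))]
  have hval : (F' / F t).re
      = (F'.re * (F t).re + (F t).re * F'.re + (F'.im * (F t).im + (F t).im * F'.im))
        / ((F t).re * (F t).re + (F t).im * (F t).im) / 2 := by
    rw [Complex.div_re, Complex.normSq_apply]
    field_simp
    ring
  rw [hfun, hval]
  exact hlog

set_option maxHeartbeats 3200000 in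
/-- Hadamard variational formula in the Loewner–Kufarev model.
For the inverse uniformization flow `dw_t/dt = p_t(w_t) w_t` with Schwarz-integral
`p_t` of density `ρ_t ≥ 0`, the Green's function
`G_t(z,z') = log |(w_t(z)−w_t(z'))/(1−conj(w_t(z)) w_t(z'))|` varies as
`dG_t(z,z')/dt = (1/2π) ∮_{∂D_t} H_t(z,s) H_t(z',s) v_n(s) |ds|`.
Pulled back to the circle (`s = z_t(e^{iφ})`, `H_t = |w_t'| K`, `v_n = |z_t'| ρ_t`,
`|ds| = |z_t'| dφ`, `|w_t'||z_t'| = 1`), the right-hand side reads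
`(1/2π) ∫₀^{2π} K_t(z,φ) K_t(z',φ) ρ_t(φ) dφ`, with the Poisson kernel factor
`K_t(ζ,φ) = Re((e^{iφ}+ξ)/(e^{iφ}−ξ))`, `ξ = 1/conj(w_t(ζ))`. -/
theorem hadamard_variational_formula
    (w : ℝ → ℂ → ℂ) (p : ℝ → ℂ → ℂ) (ρ : ℝ → ℝ → ℝ)
    (hρpos : ∀ t φ, 0 ≤ ρ t φ)
    (hρcont : Continuous fun q : ℝ × ℝ => ρ q.1 q.2)
    (hp : ∀ t u, p t u = (((2 * Real.pi : ℝ)) : ℂ)⁻¹ *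
      ∫ φ in (0:ℝ)..(2 * Real.pi),
        ((Complex.exp (φ * Complex.I) + u) / (Complex.exp (φ * Complex.I) - u)) *
          ((ρ t φ : ℝ) : ℂ))
    (hflow : ∀ ζ t, HasDerivAt (fun τ => w τ ζ) (p t (w t ζ) * w t ζ) t)
    (z z' : ℂ) (t : ℝ)
    (hz : 1 < ‖w t z‖) (hz' : 1 < ‖w t z'‖)
    (hne : w t z ≠ w t z') :
    HasDerivAt
      (fun τ => Real.log
        ‖(w τ z - w τ z') / (1 - (starRingEnd ℂ) (w τ z) * w τ z')‖)
      ((2 * Real.pi)⁻¹ *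
        ∫ φ in (0:ℝ)..(2 * Real.pi),
          ((Complex.exp (φ * Complex.I) + ((starRingEnd ℂ) (w t z))⁻¹) /
            (Complex.exp (φ * Complex.I) - ((starRingEnd ℂ) (w t z))⁻¹)).re *
          ((Complex.exp (φ * Complex.I) + ((starRingEnd ℂ) (w t z'))⁻¹) /
            (Complex.exp (φ * Complex.I) - ((starRingEnd ℂ) (w t z'))⁻¹)).re *
          ρ t φ) t := by
  set a := w t z with ha
  set b := w t z' with hb
  set A := (starRingEnd ℂ) a with hA
  set B := (starRingEnd ℂ) b with hB
  -- basic facts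
  have hAabs : 1 < ‖A‖ := by rw [hA, Complex.norm_conj]; exact hz
  have hBabs : 1 < ‖B‖ := by rw [hB, Complex.norm_conj]; exact hz'
  have hA0 : A ≠ 0 := fun h => by rw [h, norm_zero] at hAabs; norm_num at hAabs
  have hB0 : B ≠ 0 := fun h => by rw [h, norm_zero] at hBabs; norm_num at hBabs
  have hπ : (Real.pi : ℂ) ≠ 0 := Complex.ofReal_ne_zero.mpr Real.pi_ne_zero
  have hcA : (starRingEnd ℂ) A = a := by rw [hA, Complex.conj_conj]
  have hcB : (starRingEnd ℂ) B = b := by rw [hB, Complex.conj_conj]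
  have hab : a - b ≠ 0 := sub_ne_zero.mpr hne
  have hAB : A - B ≠ 0 := by
    rw [hA, hB]
    exact sub_ne_zero.mpr fun h => hne (by simpa using congrArg (starRingEnd ℂ) h)
  have hAb : (1 : ℂ) - A * b ≠ 0 := by
    intro h
    have h1 : A * b = 1 := by linear_combination -h
    have h2 := congrArg (‖·‖) h1
    rw [norm_mul, norm_one] at h2
    nlinarith [hAabs, hz', norm_nonneg A, norm_nonneg b]
  have haB : (1 : ℂ) - a * B ≠ 0 := by
    intro h
    have h1 : a * B = 1 := by linear_combination -h
    have h2 := congrArg (‖·‖) h1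
    rw [norm_mul, norm_one] at h2
    nlinarith [hBabs, hz, norm_nonneg a, norm_nonneg B]
  have habs_e : ∀ φ : ℝ, ‖Complex.exp (φ * Complex.I)‖ = 1 := fun φ =>
    Complex.norm_exp_ofReal_mul_I φ
  have hea : ∀ φ : ℝ, Complex.exp (φ * Complex.I) - a ≠ 0 := by
    intro φ
    refine sub_ne_zero.mpr fun h1 => ?_
    rw [← h1, habs_e φ] at hz
    exact lt_irrefl 1 hz
  have heb : ∀ φ : ℝ, Complex.exp (φ * Complex.I) - b ≠ 0 := by
    intro φ
    refine sub_ne_zero.mpr fun h1 => ?_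
    rw [← h1, habs_e φ] at hz'
    exact lt_irrefl 1 hz'
  have hAe : ∀ φ : ℝ, (1 : ℂ) - A * Complex.exp (φ * Complex.I) ≠ 0 := by
    intro φ h
    have h1 : A * Complex.exp (φ * Complex.I) = 1 := by linear_combination -h
    have h2 := congrArg (‖·‖) h1
    rw [norm_mul, habs_e φ, mul_one, norm_one] at h2
    exact (ne_of_gt hAabs) h2
  have hBe : ∀ φ : ℝ, (1 : ℂ) - B * Complex.exp (φ * Complex.I) ≠ 0 := by
    intro φ h
    have h1 : B * Complex.exp (φ * Complex.I) = 1 := by linear_combination -h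
    have h2 := congrArg (‖·‖) h1
    rw [norm_mul, habs_e φ, mul_one, norm_one] at h2
    exact (ne_of_gt hBabs) h2
  have heA : ∀ φ : ℝ, Complex.exp (φ * Complex.I) - A⁻¹ ≠ 0 := by
    intro φ
    refine sub_ne_zero.mpr fun h1 => ?_
    have h2 := congrArg (‖·‖) h1
    rw [habs_e φ, norm_inv] at h2
    have h3 : ‖A‖⁻¹ = 1 := h2.symm
    rw [inv_eq_one] at h3
    exact (ne_of_gt hAabs) h3
  have heB : ∀ φ : ℝ, Complex.exp (φ * Complex.I) - B⁻¹ ≠ 0 := by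
    intro φ
    refine sub_ne_zero.mpr fun h1 => ?_
    have h2 := congrArg (‖·‖) h1
    rw [habs_e φ, norm_inv] at h2
    have h3 : ‖B‖⁻¹ = 1 := h2.symm
    rw [inv_eq_one] at h3
    exact (ne_of_gt hBabs) h3
  -- conjugation of the circle point
  have hce : ∀ φ : ℝ, (starRingEnd ℂ) (Complex.exp (φ * Complex.I))
      = (Complex.exp (φ * Complex.I))⁻¹ := by
    intro φ
    rw [← Complex.exp_conj, ← Complex.exp_neg]
    congr 1
    rw [map_mul, Complex.conj_ofReal, Complex.conj_I]
    ring
  have hconjSa : ∀ φ : ℝ, (starRingEnd ℂ)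
      ((Complex.exp (φ * Complex.I) + a) / (Complex.exp (φ * Complex.I) - a))
      = (1 + A * Complex.exp (φ * Complex.I)) / (1 - A * Complex.exp (φ * Complex.I)) := by
    intro φ
    have d1 : (Complex.exp (φ * Complex.I))⁻¹ - A ≠ 0 := by
      intro h
      refine hAe φ ?_
      rw [← sub_eq_zero.mp h, inv_mul_cancel₀ (Complex.exp_ne_zero _)]
      exact sub_self 1
    have hEi : Complex.exp (φ * Complex.I) * (Complex.exp (φ * Complex.I))⁻¹ = 1 :=
      mul_inv_cancel₀ (Complex.exp_ne_zero _)
    rw [map_div₀, map_add, map_sub, hce φ, ← hA, div_eq_div_iff d1 (hAe φ)]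
    linear_combination (-(2*A)) * hEi
  have hconjSb : ∀ φ : ℝ, (starRingEnd ℂ)
      ((Complex.exp (φ * Complex.I) + b) / (Complex.exp (φ * Complex.I) - b))
      = (1 + B * Complex.exp (φ * Complex.I)) / (1 - B * Complex.exp (φ * Complex.I)) := by
    intro φ
    have d1 : (Complex.exp (φ * Complex.I))⁻¹ - B ≠ 0 := by
      intro h
      refine hBe φ ?_
      rw [← sub_eq_zero.mp h, inv_mul_cancel₀ (Complex.exp_ne_zero _)]
      exact sub_self 1
    have hEi : Complex.exp (φ * Complex.I) * (Complex.exp (φ * Complex.I))⁻¹ = 1 :=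
      mul_inv_cancel₀ (Complex.exp_ne_zero _)
    rw [map_div₀, map_add, map_sub, hce φ, ← hB, div_eq_div_iff d1 (hBe φ)]
    linear_combination (-(2*B)) * hEi
  -- derivative of the Green's function via the quotient rule
  have hwz := hflow z t
  have hwz' := hflow z' t
  rw [← ha] at hwz
  rw [← hb] at hwz'
  have hcj : HasDerivAt (fun τ => (starRingEnd ℂ) (w τ z)) ((starRingEnd ℂ) (p t a * a)) t := by
    have h2 := ((Complex.conjCLE : ℂ ≃L[ℝ] ℂ) :
      ℂ →L[ℝ] ℂ).hasFDerivAt.comp_hasDerivAt t hwz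
    simpa [Function.comp_def] using h2
  have hNum : HasDerivAt (fun τ => w τ z - w τ z') (p t a * a - p t b * b) t := hwz.sub hwz'
  have hDen : HasDerivAt (fun τ => 1 - (starRingEnd ℂ) (w τ z) * w τ z')
      (0 - ((starRingEnd ℂ) (p t a * a) * b + A * (p t b * b))) t :=
    (hasDerivAt_const t (1 : ℂ)).sub (hcj.mul hwz')
  set DV := ((p t a * a - p t b * b) * (1 - A * b)
      - (a - b) * (0 - ((starRingEnd ℂ) (p t a * a) * b + A * (p t b * b))))
      / (1 - A * b) ^ 2 with hDV
  have hF : HasDerivAt (fun τ => (w τ z - w τ z') / (1 - (starRingEnd ℂ) (w τ z) * w τ z'))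
      DV t := hNum.div hDen hAb
  have hFt0 : (a - b) / (1 - A * b) ≠ 0 := div_ne_zero hab hAb
  have hG := hasDerivAt_log_complexAbs hF rfl hFt0
  set W := DV / ((a - b) / (1 - A * b)) with hWdef
  -- the Schwarz integrals
  have hpa := hp t a
  have hpb := hp t b
  set Ia := ∫ φ in (0:ℝ)..(2 * Real.pi),
      ((Complex.exp (φ * Complex.I) + a) / (Complex.exp (φ * Complex.I) - a)) *
        ((ρ t φ : ℝ) : ℂ) with hIa
  set Ib := ∫ φ in (0:ℝ)..(2 * Real.pi),
      ((Complex.exp (φ * Complex.I) + b) / (Complex.exp (φ * Complex.I) - b)) *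
        ((ρ t φ : ℝ) : ℂ) with hIb
  have hπC : ((2 * Real.pi : ℝ) : ℂ) ≠ 0 := by
    exact_mod_cast (ne_of_gt (by positivity : (0:ℝ) < 2 * Real.pi))
  have hW : W = (((2 * Real.pi : ℝ)) : ℂ)⁻¹ * ((Ia * a - Ib * b) / (a - b)
      + ((starRingEnd ℂ) Ia * A * b + A * (Ib * b)) / (1 - A * b)) := by
    rw [hWdef, hDV, hpa, hpb]
    simp only [map_mul, map_inv₀, Complex.conj_ofReal]
    rw [← hA]
    field_simp [hπ, hab, hAb, show (1:ℂ) - b * A ≠ 0 by rwa [mul_comm]]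
    ring
  have hWc : (starRingEnd ℂ) W = (((2 * Real.pi : ℝ)) : ℂ)⁻¹ *
      (((starRingEnd ℂ) Ia * A - (starRingEnd ℂ) Ib * B) / (A - B)
        + (Ia * a * B + a * ((starRingEnd ℂ) Ib * B)) / (1 - a * B)) := by
    rw [hW]
    simp only [map_mul, map_add, map_sub, map_div₀, map_one, map_inv₀,
      Complex.conj_ofReal, Complex.conj_conj]
    simp only [hcA, hcB, ← hA, ← hB]
    try ring
  have hsum : W + (starRingEnd ℂ) W = (((2 * Real.pi : ℝ)) : ℂ)⁻¹ *
      ((a / (a - b) + a * B / (1 - a * B)) * Ia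
        + ((-(b / (a - b)) + A * b / (1 - A * b)) * Ib
          + ((A / (A - B) + A * b / (1 - A * b)) * ((starRingEnd ℂ) Ia)
            + (-(B / (A - B)) + a * B / (1 - a * B)) * ((starRingEnd ℂ) Ib)))) := by
    rw [hWc, hW]
    ring
  -- integrability
  have hρtc : Continuous fun φ : ℝ => ρ t φ :=
    hρcont.comp (continuous_const.prodMk continuous_id)
  have hρcc : Continuous fun φ : ℝ => ((ρ t φ : ℝ) : ℂ) :=
    Complex.continuous_ofReal.comp hρtc
  have hec : Continuous fun φ : ℝ => Complex.exp (φ * Complex.I) :=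
    Complex.continuous_exp.comp (Complex.continuous_ofReal.mul continuous_const)
  have hi1 : IntervalIntegrable (fun φ : ℝ =>
      ((Complex.exp (φ * Complex.I) + a) / (Complex.exp (φ * Complex.I) - a)) *
        ((ρ t φ : ℝ) : ℂ)) MeasureTheory.volume 0 (2 * Real.pi) :=
    (((hec.add continuous_const).div (hec.sub continuous_const) hea).mul
      hρcc).intervalIntegrable 0 (2 * Real.pi)
  have hi2 : IntervalIntegrable (fun φ : ℝ =>
      ((Complex.exp (φ * Complex.I) + b) / (Complex.exp (φ * Complex.I) - b)) *
        ((ρ t φ : ℝ) : ℂ)) MeasureTheory.volume 0 (2 * Real.pi) :=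
    (((hec.add continuous_const).div (hec.sub continuous_const) heb).mul
      hρcc).intervalIntegrable 0 (2 * Real.pi)
  have hi3 : IntervalIntegrable (fun φ : ℝ =>
      ((1 + A * Complex.exp (φ * Complex.I)) / (1 - A * Complex.exp (φ * Complex.I))) *
        ((ρ t φ : ℝ) : ℂ)) MeasureTheory.volume 0 (2 * Real.pi) :=
    (((continuous_const.add (continuous_const.mul hec)).div
      (continuous_const.sub (continuous_const.mul hec)) hAe).mul
      hρcc).intervalIntegrable 0 (2 * Real.pi)
  have hi4 : IntervalIntegrable (fun φ : ℝ =>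
      ((1 + B * Complex.exp (φ * Complex.I)) / (1 - B * Complex.exp (φ * Complex.I))) *
        ((ρ t φ : ℝ) : ℂ)) MeasureTheory.volume 0 (2 * Real.pi) :=
    (((continuous_const.add (continuous_const.mul hec)).div
      (continuous_const.sub (continuous_const.mul hec)) hBe).mul
      hρcc).intervalIntegrable 0 (2 * Real.pi)
  have hle : (0:ℝ) ≤ 2 * Real.pi := by positivity
  -- conjugates of the integrals
  have hJa : (starRingEnd ℂ) Ia = ∫ φ in (0:ℝ)..(2 * Real.pi),
      ((1 + A * Complex.exp (φ * Complex.I)) / (1 - A * Complex.exp (φ * Complex.I))) *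
        ((ρ t φ : ℝ) : ℂ) := by
    rw [hIa, intervalIntegral.integral_of_le hle, intervalIntegral.integral_of_le hle,
      ← integral_conj]
    refine MeasureTheory.integral_congr_ae (Filter.Eventually.of_forall fun φ => ?_)
    simp only [map_mul, Complex.conj_ofReal, hconjSa φ]
  have hJb : (starRingEnd ℂ) Ib = ∫ φ in (0:ℝ)..(2 * Real.pi),
      ((1 + B * Complex.exp (φ * Complex.I)) / (1 - B * Complex.exp (φ * Complex.I))) *
        ((ρ t φ : ℝ) : ℂ) := by
    rw [hIb, intervalIntegral.integral_of_le hle, intervalIntegral.integral_of_le hle,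
      ← integral_conj]
    refine MeasureTheory.integral_congr_ae (Filter.Eventually.of_forall fun φ => ?_)
    simp only [map_mul, Complex.conj_ofReal, hconjSb φ]
  -- combine into a single integral
  have hbig : (∫ φ in (0:ℝ)..(2 * Real.pi),
      ((a / (a - b) + a * B / (1 - a * B)) *
          (((Complex.exp (φ * Complex.I) + a) / (Complex.exp (φ * Complex.I) - a)) *
            ((ρ t φ : ℝ) : ℂ))
        + ((-(b / (a - b)) + A * b / (1 - A * b)) *
            (((Complex.exp (φ * Complex.I) + b) / (Complex.exp (φ * Complex.I) - b)) *
              ((ρ t φ : ℝ) : ℂ))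
          + ((A / (A - B) + A * b / (1 - A * b)) *
              (((1 + A * Complex.exp (φ * Complex.I)) /
                (1 - A * Complex.exp (φ * Complex.I))) * ((ρ t φ : ℝ) : ℂ))
            + (-(B / (A - B)) + a * B / (1 - a * B)) *
              (((1 + B * Complex.exp (φ * Complex.I)) /
                (1 - B * Complex.exp (φ * Complex.I))) * ((ρ t φ : ℝ) : ℂ))))))
      = (a / (a - b) + a * B / (1 - a * B)) * Ia
        + ((-(b / (a - b)) + A * b / (1 - A * b)) * Ib
          + ((A / (A - B) + A * b / (1 - A * b)) * ((starRingEnd ℂ) Ia)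
            + (-(B / (A - B)) + a * B / (1 - a * B)) * ((starRingEnd ℂ) Ib))) := by
    rw [intervalIntegral.integral_add (hi1.const_mul _)
        ((hi2.const_mul _).add ((hi3.const_mul _).add (hi4.const_mul _))),
      intervalIntegral.integral_add (hi2.const_mul _) ((hi3.const_mul _).add (hi4.const_mul _)),
      intervalIntegral.integral_add (hi3.const_mul _) (hi4.const_mul _),
      intervalIntegral.integral_const_mul, intervalIntegral.integral_const_mul,
      intervalIntegral.integral_const_mul, intervalIntegral.integral_const_mul,
      ← hIa, ← hIb, ← hJa, ← hJb]
  -- pointwise identity on the circle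
  have hptw : Set.EqOn (fun φ : ℝ =>
      ((a / (a - b) + a * B / (1 - a * B)) *
          (((Complex.exp (φ * Complex.I) + a) / (Complex.exp (φ * Complex.I) - a)) *
            ((ρ t φ : ℝ) : ℂ))
        + ((-(b / (a - b)) + A * b / (1 - A * b)) *
            (((Complex.exp (φ * Complex.I) + b) / (Complex.exp (φ * Complex.I) - b)) *
              ((ρ t φ : ℝ) : ℂ))
          + ((A / (A - B) + A * b / (1 - A * b)) *
              (((1 + A * Complex.exp (φ * Complex.I)) /
                (1 - A * Complex.exp (φ * Complex.I))) * ((ρ t φ : ℝ) : ℂ))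
            + (-(B / (A - B)) + a * B / (1 - a * B)) *
              (((1 + B * Complex.exp (φ * Complex.I)) /
                (1 - B * Complex.exp (φ * Complex.I))) * ((ρ t φ : ℝ) : ℂ))))))
      (fun φ : ℝ => ((2 * (((Complex.exp (φ * Complex.I) + A⁻¹) /
            (Complex.exp (φ * Complex.I) - A⁻¹)).re *
          ((Complex.exp (φ * Complex.I) + B⁻¹) /
            (Complex.exp (φ * Complex.I) - B⁻¹)).re * ρ t φ) : ℝ) : ℂ))
      (Set.uIcc 0 (2 * Real.pi)) := by
    intro φ _
    have hid := key_identity (Complex.exp (φ * Complex.I)) a b A B hab hAB (hea φ) (heb φ)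
      hAb haB (hAe φ) (hBe φ)
    have hKa : ((Complex.exp (φ * Complex.I) + A⁻¹) /
        (Complex.exp (φ * Complex.I) - A⁻¹)).re
        = -(((Complex.exp (φ * Complex.I) + a) / (Complex.exp (φ * Complex.I) - a)).re) := by
      have hUT : (Complex.exp (φ * Complex.I) + A⁻¹) / (Complex.exp (φ * Complex.I) - A⁻¹)
          = -((1 + A * Complex.exp (φ * Complex.I)) /
              (1 - A * Complex.exp (φ * Complex.I))) := by
        have hAi : A * A⁻¹ = 1 := mul_inv_cancel₀ hA0
        rw [← neg_div, div_eq_div_iff (heA φ) (hAe φ)]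
        linear_combination (-(2 * Complex.exp (φ * Complex.I))) * hAi
      rw [hUT, ← hconjSa φ, Complex.neg_re, Complex.conj_re]
    have hKb : ((Complex.exp (φ * Complex.I) + B⁻¹) /
        (Complex.exp (φ * Complex.I) - B⁻¹)).re
        = -(((Complex.exp (φ * Complex.I) + b) / (Complex.exp (φ * Complex.I) - b)).re) := by
      have hUT : (Complex.exp (φ * Complex.I) + B⁻¹) / (Complex.exp (φ * Complex.I) - B⁻¹)
          = -((1 + B * Complex.exp (φ * Complex.I)) /
              (1 - B * Complex.exp (φ * Complex.I))) := by
        have hBi : B * B⁻¹ = 1 := mul_inv_cancel₀ hB0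
        rw [← neg_div, div_eq_div_iff (heB φ) (hBe φ)]
        linear_combination (-(2 * Complex.exp (φ * Complex.I))) * hBi
      rw [hUT, ← hconjSb φ, Complex.neg_re, Complex.conj_re]
    show _ = _
    calc ((a / (a - b) + a * B / (1 - a * B)) *
          (((Complex.exp (φ * Complex.I) + a) / (Complex.exp (φ * Complex.I) - a)) *
            ((ρ t φ : ℝ) : ℂ))
        + ((-(b / (a - b)) + A * b / (1 - A * b)) *
            (((Complex.exp (φ * Complex.I) + b) / (Complex.exp (φ * Complex.I) - b)) *
              ((ρ t φ : ℝ) : ℂ))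
          + ((A / (A - B) + A * b / (1 - A * b)) *
              (((1 + A * Complex.exp (φ * Complex.I)) /
                (1 - A * Complex.exp (φ * Complex.I))) * ((ρ t φ : ℝ) : ℂ))
            + (-(B / (A - B)) + a * B / (1 - a * B)) *
              (((1 + B * Complex.exp (φ * Complex.I)) /
                (1 - B * Complex.exp (φ * Complex.I))) * ((ρ t φ : ℝ) : ℂ)))))
        = ((a / (a - b) + a * B / (1 - a * B)) *
            ((Complex.exp (φ * Complex.I) + a) / (Complex.exp (φ * Complex.I) - a))
          + (-(b / (a - b)) + A * b / (1 - A * b)) *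
            ((Complex.exp (φ * Complex.I) + b) / (Complex.exp (φ * Complex.I) - b))
          + (A / (A - B) + A * b / (1 - A * b)) *
            ((1 + A * Complex.exp (φ * Complex.I)) / (1 - A * Complex.exp (φ * Complex.I)))
          + (-(B / (A - B)) + a * B / (1 - a * B)) *
            ((1 + B * Complex.exp (φ * Complex.I)) /
              (1 - B * Complex.exp (φ * Complex.I)))) * ((ρ t φ : ℝ) : ℂ) := by ring
      _ = (((Complex.exp (φ * Complex.I) + a) / (Complex.exp (φ * Complex.I) - a)
            + (1 + A * Complex.exp (φ * Complex.I)) /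
              (1 - A * Complex.exp (φ * Complex.I))) *
          ((Complex.exp (φ * Complex.I) + b) / (Complex.exp (φ * Complex.I) - b)
            + (1 + B * Complex.exp (φ * Complex.I)) /
              (1 - B * Complex.exp (φ * Complex.I))) / 2) * ((ρ t φ : ℝ) : ℂ) := by
        rw [hid]
      _ = ((2 * (((Complex.exp (φ * Complex.I) + A⁻¹) /
              (Complex.exp (φ * Complex.I) - A⁻¹)).re *
            ((Complex.exp (φ * Complex.I) + B⁻¹) /
              (Complex.exp (φ * Complex.I) - B⁻¹)).re * ρ t φ) : ℝ) : ℂ) := by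
        rw [← hconjSa φ, ← hconjSb φ, Complex.add_conj, Complex.add_conj, hKa, hKb]
        push_cast
        ring
  -- put everything together
  have hXX : W + (starRingEnd ℂ) W = (((2 * Real.pi : ℝ)) : ℂ)⁻¹ *
      ((2 * ∫ φ in (0:ℝ)..(2 * Real.pi),
        ((Complex.exp (φ * Complex.I) + A⁻¹) /
            (Complex.exp (φ * Complex.I) - A⁻¹)).re *
          ((Complex.exp (φ * Complex.I) + B⁻¹) /
            (Complex.exp (φ * Complex.I) - B⁻¹)).re * ρ t φ : ℝ) : ℂ) := by
    rw [hsum, ← hbig, intervalIntegral.integral_congr hptw,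
      intervalIntegral.integral_ofReal, intervalIntegral.integral_const_mul]
  have hreal : W.re = (2 * Real.pi)⁻¹ * ∫ φ in (0:ℝ)..(2 * Real.pi),
      ((Complex.exp (φ * Complex.I) + A⁻¹) /
          (Complex.exp (φ * Complex.I) - A⁻¹)).re *
        ((Complex.exp (φ * Complex.I) + B⁻¹) /
          (Complex.exp (φ * Complex.I) - B⁻¹)).re * ρ t φ := by
    set R := ∫ φ in (0:ℝ)..(2 * Real.pi),
      ((Complex.exp (φ * Complex.I) + A⁻¹) /
          (Complex.exp (φ * Complex.I) - A⁻¹)).re *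
        ((Complex.exp (φ * Complex.I) + B⁻¹) /
          (Complex.exp (φ * Complex.I) - B⁻¹)).re * ρ t φ with hR
    have h0 : ((2 * W.re : ℝ) : ℂ) = (((2 * Real.pi)⁻¹ * (2 * R) : ℝ) : ℂ) := by
      rw [← Complex.add_conj]
      rw [hXX]
      push_cast
      ring
    have h1 : (2 * W.re : ℝ) = (2 * Real.pi)⁻¹ * (2 * R) := by exact_mod_cast h0
    linarith
  rw [show ((2 * Real.pi)⁻¹ * ∫ φ in (0:ℝ)..(2 * Real.pi),
      ((Complex.exp (φ * Complex.I) + A⁻¹) /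
          (Complex.exp (φ * Complex.I) - A⁻¹)).re *
        ((Complex.exp (φ * Complex.I) + B⁻¹) /
          (Complex.exp (φ * Complex.I) - B⁻¹)).re * ρ t φ) = W.re from hreal.symm]
  exact hG
end

section
/- (Schwarz function of an analytic Jordan curve) Let Γ be an analytic Jordan curve. Then there exist an open neighborhood U of Γ and a holomorphic function S: U → ℂ such that S(z) = z̄ for all z ∈ Γ, and S is unique on any connected neighborhood of Γ. Moreover S satisfies S'(z) = (dz̄/dz) along Γ, and |S'(z)| = 1 for z ∈ Γ. -/
open Complex Filter Set
open scoped Topology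

lemma hasDerivAt_conj_conj {f : ℂ → ℂ} {c u : ℂ}
    (hf : HasDerivAt f c ((starRingEnd ℂ) u)) :
    HasDerivAt (fun w => (starRingEnd ℂ) (f ((starRingEnd ℂ) w))) ((starRingEnd ℂ) c) u := by
  rw [hasDerivAt_iff_tendsto_slope] at hf ⊢
  have hconj : Tendsto (fun w : ℂ => (starRingEnd ℂ) w) (𝓝[≠] u) (𝓝[≠] ((starRingEnd ℂ) u)) := by
    apply tendsto_nhdsWithin_of_tendsto_nhds_of_eventually_within
    · exact ((continuous_conj.tendsto u)).mono_left nhdsWithin_le_nhds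
    · filter_upwards [self_mem_nhdsWithin] with w hw
      simp only [Set.mem_compl_iff, Set.mem_singleton_iff] at hw ⊢
      exact fun h => hw (by simpa using congrArg (starRingEnd ℂ) h)
  have : Tendsto (fun w => (starRingEnd ℂ) (slope f ((starRingEnd ℂ) u) ((starRingEnd ℂ) w)))
      (𝓝[≠] u) (𝓝 ((starRingEnd ℂ) c)) := (continuous_conj.tendsto c).comp (hf.comp hconj)
  refine this.congr fun w => ?_
  simp [slope_def_field, map_div₀, map_sub]

lemma analyticAt_strict {f : ℂ → ℂ} {x : ℂ} (h : AnalyticAt ℂ f x) :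
    HasStrictDerivAt f (deriv f x) x := by
  obtain ⟨p, hp⟩ := h
  have := hp.hasStrictDerivAt
  rwa [← hp.deriv] at this

/-- Schwarz function of an analytic Jordan curve: if `Γ = γ(∂𝔻)` for `γ`
holomorphic, injective, with nonvanishing derivative on an annulus `A` around the unit
circle, then there is an open neighborhood `U ⊇ Γ` and a holomorphic `S : U → ℂ` with
`S(z) = z̄` on `Γ` and `|S'(z)| = 1` on `Γ`; moreover `S` is unique on any connected open
neighborhood of `Γ`. -/
theorem schwarz_function_exists_unique
    (A : Set ℂ) (hA : IsOpen A) (hcirc : Metric.sphere (0:ℂ) 1 ⊆ A)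
    (γ : ℂ → ℂ) (hγ : DifferentiableOn ℂ γ A) (hinj : Set.InjOn γ A)
    (hderiv : ∀ w ∈ A, deriv γ w ≠ 0)
    (Γ : Set ℂ) (hΓ : Γ = γ '' Metric.sphere (0:ℂ) 1) :
    (∃ U : Set ℂ, IsOpen U ∧ Γ ⊆ U ∧ ∃ S : ℂ → ℂ,
      DifferentiableOn ℂ S U ∧ (∀ z ∈ Γ, S z = (starRingEnd ℂ) z)
      ∧ (∀ z ∈ Γ, ‖deriv S z‖ = 1))
    ∧ (∀ V : Set ℂ, IsOpen V → IsPreconnected V → Γ ⊆ V →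
        ∀ S₁ S₂ : ℂ → ℂ, DifferentiableOn ℂ S₁ V → DifferentiableOn ℂ S₂ V →
          (∀ z ∈ Γ, S₁ z = (starRingEnd ℂ) z) → (∀ z ∈ Γ, S₂ z = (starRingEnd ℂ) z) →
          Set.EqOn S₁ S₂ V) := by
  constructor
  · -- existence
    -- the "reflected" domain
    set A₀ : Set ℂ := A ∩ ({0}ᶜ ∩ (fun w : ℂ => (starRingEnd ℂ) w⁻¹) ⁻¹' A) with hA₀def
    have hA₀open : IsOpen A₀ := by
      refine hA.inter ?_
      have hc : ContinuousOn (fun w : ℂ => (starRingEnd ℂ) w⁻¹) ({0}ᶜ : Set ℂ) :=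
        continuous_conj.comp_continuousOn (continuousOn_inv₀.mono fun x hx => hx)
      exact hc.isOpen_inter_preimage (isOpen_compl_singleton) hA
    have hsphere_inv : ∀ w : ℂ, w ∈ Metric.sphere (0:ℂ) 1 → (starRingEnd ℂ) w⁻¹ = w := by
      intro w hw
      have hw1 : ‖w‖ = 1 := by simpa using hw
      have hw0 : w ≠ 0 := by intro h; rw [h] at hw1; simp at hw1
      rw [Complex.inv_def, map_mul, Complex.conj_conj]
      simp [Complex.normSq_eq_norm_sq, hw1]
    have hsA₀ : Metric.sphere (0:ℂ) 1 ⊆ A₀ := by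
      intro w hw
      have hw1 : ‖w‖ = 1 := by simpa using hw
      refine ⟨hcirc hw, ?_, ?_⟩
      · intro h; simp only [Set.mem_singleton_iff] at h; rw [h] at hw1; simp at hw1
      · simp only [Set.mem_preimage]; rw [hsphere_inv w hw]; exact hcirc hw
    -- the reflected function
    set h : ℂ → ℂ := fun w => (starRingEnd ℂ) (γ ((starRingEnd ℂ) w⁻¹)) with hhdef
    have hderivA : ∀ w ∈ A, HasDerivAt γ (deriv γ w) w := fun w hw =>
      (hγ.differentiableAt (hA.mem_nhds hw)).hasDerivAt
    have hh : ∀ w ∈ A₀, HasDerivAt h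
        ((starRingEnd ℂ) (deriv γ ((starRingEnd ℂ) w⁻¹)) * (-(w ^ 2)⁻¹)) w := by
      rintro w ⟨hwA, hw0, hwinv⟩
      simp only [Set.mem_compl_iff, Set.mem_singleton_iff] at hw0
      have h1 : HasDerivAt (fun u => (starRingEnd ℂ) (γ ((starRingEnd ℂ) u)))
          ((starRingEnd ℂ) (deriv γ ((starRingEnd ℂ) w⁻¹))) w⁻¹ :=
        hasDerivAt_conj_conj (hderivA _ hwinv)
      have h2 : HasDerivAt (fun w : ℂ => w⁻¹) (-(w ^ 2)⁻¹) w := hasDerivAt_inv hw0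
      exact h1.comp w h2
    -- local inverses and strictness
    have hstrict : ∀ w ∈ A, HasStrictDerivAt γ (deriv γ w) w := fun w hw =>
      analyticAt_strict (hγ.analyticAt (hA.mem_nhds hw))
    set U : Set ℂ := γ '' A₀ with hUdef
    have hUnhds : ∀ w ∈ A₀, U ∈ 𝓝 (γ w) := by
      intro w hw
      rw [← (hstrict w hw.1).map_nhds_eq (hderiv w hw.1)]
      exact mem_map.2 (mem_of_superset (hA₀open.mem_nhds hw)
        (fun x hx => Set.mem_preimage.2 (Set.mem_image_of_mem γ hx)))
    have hUopen : IsOpen U := by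
      rw [isOpen_iff_mem_nhds]
      rintro z ⟨w, hw, rfl⟩
      exact hUnhds w hw
    set S : ℂ → ℂ := fun z => h (Function.invFunOn γ A z) with hSdef
    -- key facts at each point of A₀
    have hSloc : ∀ w ∈ A₀, DifferentiableAt ℂ S (γ w) ∧
        deriv S (γ w) = ((starRingEnd ℂ) (deriv γ ((starRingEnd ℂ) w⁻¹)) * (-(w ^ 2)⁻¹))
          * (deriv γ w)⁻¹ := by
      intro w hw
      have hst := hstrict w hw.1
      have hd0 := hderiv w hw.1
      set ψ := hst.localInverse γ (deriv γ w) w hd0 with hψdef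
      have hψw : ψ (γ w) = w := by
        have := hst.hasStrictFDerivAt_equiv hd0 |>.localInverse_apply_image
        exact this
      have hψcont : ContinuousAt ψ (γ w) :=
        (hst.hasStrictFDerivAt_equiv hd0).localInverse_continuousAt
      have hψright : ∀ᶠ z in 𝓝 (γ w), γ (ψ z) = z :=
        (hst.hasStrictFDerivAt_equiv hd0).eventually_right_inverse
      have hψmem : ∀ᶠ z in 𝓝 (γ w), ψ z ∈ A₀ := by
        have := hψcont.preimage_mem_nhds (by rw [hψw]; exact hA₀open.mem_nhds hw)
        exact this
      have hSeq : ∀ᶠ z in 𝓝 (γ w), S z = h (ψ z) := by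
        filter_upwards [hψright, hψmem] with z h1 h2
        have hz : z ∈ γ '' A := ⟨ψ z, h2.1, h1⟩
        have e1 : Function.invFunOn γ A z ∈ A := Function.invFunOn_mem (by
          obtain ⟨a, ha, rfl⟩ := hz; exact ⟨a, ha, rfl⟩)
        have e2 : γ (Function.invFunOn γ A z) = z := Function.invFunOn_eq (by
          obtain ⟨a, ha, rfl⟩ := hz; exact ⟨a, ha, rfl⟩)
        have : Function.invFunOn γ A z = ψ z := hinj e1 h2.1 (by rw [e2, h1])
        rw [hSdef]; simp only; rw [this]
      have hψd : HasDerivAt ψ (deriv γ w)⁻¹ (γ w) :=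
        (HasStrictDerivAt.to_localInverse hst hd0).hasDerivAt
      have hhd := hh w hw
      have hhd' : HasDerivAt h
          ((starRingEnd ℂ) (deriv γ ((starRingEnd ℂ) w⁻¹)) * (-(w ^ 2)⁻¹)) (ψ (γ w)) := by
        rw [hψw]; exact hhd
      have hcomp : HasDerivAt (fun z => h (ψ z))
          (((starRingEnd ℂ) (deriv γ ((starRingEnd ℂ) w⁻¹)) * (-(w ^ 2)⁻¹)) * (deriv γ w)⁻¹)
          (γ w) := by
        have := hhd'.comp (γ w) hψd
        exact this
      have hSd : HasDerivAt S
          (((starRingEnd ℂ) (deriv γ ((starRingEnd ℂ) w⁻¹)) * (-(w ^ 2)⁻¹)) * (deriv γ w)⁻¹)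
          (γ w) := hcomp.congr_of_eventuallyEq hSeq
      exact ⟨hSd.differentiableAt, hSd.deriv⟩
    refine ⟨U, hUopen, ?_, S, ?_, ?_, ?_⟩
    · rw [hΓ]; exact Set.image_mono hsA₀
    · rintro z ⟨w, hw, rfl⟩
      exact ((hSloc w hw).1).differentiableWithinAt
    · rw [hΓ]
      rintro z ⟨w, hw, rfl⟩
      have hwA : w ∈ A := hcirc hw
      have hz : ∃ a ∈ A, γ a = γ w := ⟨w, hwA, rfl⟩
      have e1 : Function.invFunOn γ A (γ w) ∈ A := Function.invFunOn_mem hz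
      have e2 : γ (Function.invFunOn γ A (γ w)) = γ w := Function.invFunOn_eq hz
      have hww : Function.invFunOn γ A (γ w) = w := hinj e1 hwA e2
      rw [hSdef]; simp only; rw [hww, hhdef]; simp only
      rw [hsphere_inv w hw]
    · rw [hΓ]
      rintro z ⟨w, hw, rfl⟩
      have hw1 : ‖w‖ = 1 := by simpa using hw
      have hwA₀ : w ∈ A₀ := hsA₀ hw
      rw [(hSloc w hwA₀).2, hsphere_inv w hw]
      have hd0 := hderiv w hwA₀.1
      have habs : ‖deriv γ w‖ ≠ 0 := by simpa using hd0
      simp only [norm_mul, Complex.norm_conj, norm_inv]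
      rw [show ‖-(w ^ 2)⁻¹‖ = 1 by
        rw [norm_neg, norm_inv, norm_pow, hw1]; norm_num]
      field_simp
  · -- uniqueness
    intro V hVopen hVconn hΓV S₁ S₂ hS₁ hS₂ h₁ h₂
    have hA₁ : AnalyticOnNhd ℂ S₁ V := hS₁.analyticOnNhd hVopen
    have hA₂ : AnalyticOnNhd ℂ S₂ V := hS₂.analyticOnNhd hVopen
    have h1mem : (1 : ℂ) ∈ Metric.sphere (0:ℂ) 1 := by simp
    have hγ1 : γ 1 ∈ Γ := by rw [hΓ]; exact ⟨1, h1mem, rfl⟩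
    -- accumulating sequence
    set u : ℕ → ℂ := fun n => γ (Complex.exp (((n:ℝ)+1)⁻¹ * Complex.I)) with hudef
    have hsph : ∀ n : ℕ, Complex.exp (((n:ℝ)+1)⁻¹ * Complex.I) ∈ Metric.sphere (0:ℂ) 1 := by
      intro n
      simp only [Metric.mem_sphere, dist_zero_right, Complex.norm_exp]
      norm_num
    have hne1 : ∀ n : ℕ, Complex.exp (((n:ℝ)+1)⁻¹ * Complex.I) ≠ 1 := by
      intro n h
      rw [Complex.exp_eq_one_iff] at h
      obtain ⟨k, hk⟩ := h
      have hre : ((n:ℝ)+1)⁻¹ = (k:ℝ) * (2 * Real.pi) := by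
        have hk' : ((((n:ℝ)+1)⁻¹ : ℝ) : ℂ) * Complex.I
            = (((k:ℝ) * (2*Real.pi) : ℝ) : ℂ) * Complex.I := by
          push_cast at hk ⊢
          rw [hk]; ring
        have := mul_right_cancel₀ Complex.I_ne_zero hk'
        exact_mod_cast this
      have hpos : (0:ℝ) < ((n:ℝ)+1)⁻¹ := by positivity
      have hle : ((n:ℝ)+1)⁻¹ ≤ 1 := by
        rw [inv_le_one_iff₀]; right; linarith [Nat.cast_nonneg (α := ℝ) n]
      rcases lt_trichotomy (k:ℝ) 0 with hk0 | hk0 | hk0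
      · have hk1 : (k:ℝ) ≤ -1 := by exact_mod_cast Int.le_of_lt_add_one (by exact_mod_cast hk0)
        nlinarith [Real.pi_pos]
      · rw [hre, hk0] at hpos; simp at hpos
      · have hk1 : (1:ℝ) ≤ k := by exact_mod_cast hk0
        nlinarith [Real.pi_gt_three]
    have hcontγ : ContinuousAt γ 1 :=
      (hγ.differentiableAt (hA.mem_nhds (hcirc h1mem))).continuousAt
    have htend : Tendsto u atTop (𝓝[≠] (γ 1)) := by
      apply tendsto_nhdsWithin_of_tendsto_nhds_of_eventually_within
      · have h0 : Tendsto (fun n : ℕ => (((n:ℝ)+1)⁻¹ * Complex.I)) atTop (𝓝 0) := by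
          have : Tendsto (fun n : ℕ => (((n:ℝ)+1)⁻¹ : ℝ)) atTop (𝓝 0) :=
            tendsto_one_div_add_atTop_nhds_zero_nat.congr (by intro n; rw [one_div])
          have := (Complex.continuous_ofReal.tendsto 0).comp this
          simpa using this.mul_const Complex.I
        have hexp : Tendsto (fun n : ℕ => Complex.exp (((n:ℝ)+1)⁻¹ * Complex.I)) atTop (𝓝 1) := by
          have := (Complex.continuous_exp.tendsto 0).comp h0
          simpa [Function.comp_def] using this
        exact hcontγ.tendsto.comp hexp
      · filter_upwards with n
        simp only [Set.mem_compl_iff, Set.mem_singleton_iff, hudef]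
        intro hcontra
        exact hne1 n (hinj (hcirc (hsph n)) (hcirc h1mem) hcontra)
    have hfreq : ∃ᶠ z in 𝓝[≠] (γ 1), S₁ z = S₂ z := by
      apply htend.frequently
      apply Filter.Frequently.of_forall
      intro n
      have hmem : u n ∈ Γ := by rw [hΓ]; exact ⟨_, hsph n, rfl⟩
      rw [h₁ _ hmem, h₂ _ hmem]
    exact hA₁.eqOn_of_preconnected_of_frequently_eq hA₂ hVconn (hΓV hγ1) hfreq
end
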